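/- Define c₅(n) by ∑_{n≥0} c₅(n) qⁿ = ∏_{k≥1} (1−q^{5k})⁵ / (1−q^k). Then c₅(n) is even whenever n ≡ 2 (mod 10) or n ≡ 6 (mod 10). -/

import Mathlib

open PowerSeries Finset

abbrev S : Type := PowerSeries (ZMod 2)

namespace FiveCore

lemma h2 : (2 : S) = 0 := by
  have h := map_ofNat (PowerSeries.C (R := ZMod 2)) 2
  rw [← h, show (2 : ZMod 2) = 0 from rfl, map_zero]

lemma neg_eq (a : S) : -a = a := by
  have : (2 : S) * a = 0 := by rw [h2, zero_mul]
  linear_combination -this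

/-- congruence mod `X^k` -/
def Cg (k : ℕ) (a b : S) : Prop := (X : S) ^ k ∣ a - b

lemma Cg.refl (k : ℕ) (a : S) : Cg k a a := by simp [Cg]

lemma Cg.symm {k a b} (h : Cg k a b) : Cg k b a := by
  have := dvd_neg.2 h
  simpa [Cg, neg_sub] using this

lemma Cg.trans {k} {a b c : S} (h : Cg k a b) (h' : Cg k b c) : Cg k a c := by
  have := dvd_add h h'
  simpa [Cg, sub_add_sub_cancel] using this

lemma Cg.add {k} {a b c d : S} (h : Cg k a b) (h' : Cg k c d) : Cg k (a + c) (b + d) := by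
  have := dvd_add h h'
  simpa [Cg, add_sub_add_comm] using this

lemma Cg.mul {k} {a b c d : S} (h : Cg k a b) (h' : Cg k c d) : Cg k (a * c) (b * d) := by
  have : a * c - b * d = a * (c - d) + (a - b) * d := by ring
  rw [Cg, this]
  exact dvd_add (Dvd.dvd.mul_left h' a) (Dvd.dvd.mul_right h d)

lemma Cg.prod {k} {ι : Type} {s : Finset ι} {f g : ι → S}
    (h : ∀ i ∈ s, Cg k (f i) (g i)) : Cg k (∏ i ∈ s, f i) (∏ i ∈ s, g i) := by
  classical
  induction s using Finset.induction with
  | empty => simpa using Cg.refl k 1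
  | insert _ _ hnot ih =>
    rename_i a s'
    rw [Finset.prod_insert hnot, Finset.prod_insert hnot]
    exact Cg.mul (h a (by simp)) (ih fun i hi => h i (by simp [hi]))

lemma Cg.one_add_pow {k e : ℕ} (h : k ≤ e) : Cg k (1 + X ^ e) 1 := by
  simpa [Cg] using (pow_dvd_pow (X : S) h)

lemma Cg.coeff_eq {k m} {a b : S} (h : Cg k a b) (hm : m < k) :
    (coeff (R := ZMod 2) m) a = coeff (R := ZMod 2) m b := by
  have := (PowerSeries.X_pow_dvd_iff.1 h) m hm
  rw [map_sub, sub_eq_zero] at this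
  exact this

lemma Cg.of_coeff {k} {a b : S} (h : ∀ m < k, (coeff (R := ZMod 2) m) a = coeff (R := ZMod 2) m b) :
    Cg k a b := by
  rw [Cg, PowerSeries.X_pow_dvd_iff]
  intro m hm
  rw [map_sub, sub_eq_zero]
  exact h m hm

lemma Cg.sq {k} {a b : S} (h : Cg k a b) : Cg (2 * k) (a ^ 2) (b ^ 2) := by
  have hd : a ^ 2 - b ^ 2 = (a - b) ^ 2 + (2 : S) * (b * (a - b)) := by ring
  rw [Cg, hd, h2, zero_mul, add_zero, two_mul, pow_add, pow_two]
  exact mul_dvd_mul h h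

lemma Cg.inv_one {k} {u : S} (h : Cg k u 1) (hu : constantCoeff (R := ZMod 2) u ≠ 0) :
    Cg k u⁻¹ 1 := by
  have hinv : u⁻¹ * u = 1 := PowerSeries.inv_mul_cancel u hu
  have : u⁻¹ - 1 = u⁻¹ * (1 - u) + (u⁻¹ * u - 1) := by ring
  rw [Cg, this, hinv, sub_self, add_zero]
  exact Dvd.dvd.mul_left (by simpa [Cg, neg_sub] using h.symm) u⁻¹

lemma dvd_of_unit_mul {k} {u d : S} (hu : constantCoeff (R := ZMod 2) u ≠ 0)
    (h : (X : S) ^ k ∣ u * d) : (X : S) ^ k ∣ d := by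
  have hinv : u⁻¹ * (u * d) = d := by
    rw [← mul_assoc, PowerSeries.inv_mul_cancel u hu, one_mul]
  exact hinv ▸ Dvd.dvd.mul_left h u⁻¹


/-! ### q-power and products -/

noncomputable def Qp (a : ℕ) : S := X ^ (10 * a)

lemma Qp_add (a b : ℕ) : Qp (a + b) = Qp a * Qp b := by
  simp [Qp, Nat.mul_add, pow_add]

lemma Qp_zero : Qp 0 = 1 := by simp [Qp]

noncomputable def Pp (a b : ℕ) : S := ∏ i ∈ Finset.range b, (1 + Qp (a + 1 + i))

noncomputable def DD (m : ℕ) : S := Pp 0 m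

lemma Pp_zero (a : ℕ) : Pp a 0 = 1 := by simp [Pp]

lemma Pp_succ (a b : ℕ) : Pp a (b + 1) = Pp a b * (1 + Qp (a + 1 + b)) := by
  rw [Pp, Finset.prod_range_succ]; rfl

lemma Pp_one (a : ℕ) : Pp a 1 = 1 + Qp (a + 1) := by
  have h := Pp_succ a 0
  rw [Pp_zero, one_mul] at h
  simpa using h

lemma Pp_add (a b c : ℕ) : Pp a (b + c) = Pp a b * Pp (a + b) c := by
  induction c with
  | zero => simp [Pp_zero]
  | succ c ih =>
      have e1 : b + (c + 1) = (b + c) + 1 := by omega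
      have e2 : a + 1 + (b + c) = a + b + 1 + c := by omega
      rw [e1, Pp_succ, ih, Pp_succ, e2, mul_assoc]

lemma Pp_two (a : ℕ) : Pp a 2 = (1 + Qp (a + 1)) * (1 + Qp (a + 2)) := by
  have h := Pp_add a 1 1
  rw [Pp_one, Pp_one, show a + 1 + 1 = a + 2 by omega] at h
  exact h

lemma constPp (a b : ℕ) : constantCoeff (R := ZMod 2) (Pp a b) = 1 := by
  rw [Pp, map_prod]
  apply Finset.prod_eq_one
  intro i _
  rw [map_add, map_one, Qp, ← coeff_zero_eq_constantCoeff_apply, PowerSeries.coeff_X_pow,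
    if_neg (by omega), add_zero]

lemma constDD (m : ℕ) : constantCoeff (R := ZMod 2) (DD m) = 1 := constPp 0 m

lemma DD_ne (m : ℕ) : (DD m : S) ≠ 0 := by
  intro h
  have hcd := constDD m
  rw [h, map_zero] at hcd
  exact (one_ne_zero (α := ZMod 2)) hcd.symm

lemma Pp_ne (a b : ℕ) : (Pp a b : S) ≠ 0 := by
  intro h
  have hcd := constPp a b
  rw [h, map_zero] at hcd
  exact (one_ne_zero (α := ZMod 2)) hcd.symm

/-! ### Gaussian binomial as a power series -/

noncomputable def B (n : ℕ) (r : ℤ) : S :=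
  if 0 ≤ r ∧ r ≤ (n : ℤ) then Pp (n - r.toNat) r.toNat * (DD r.toNat)⁻¹ else 0

lemma B_neg {n : ℕ} {r : ℤ} (h : r < 0) : B n r = 0 := by
  rw [B, if_neg]; omega

lemma B_big {n : ℕ} {r : ℤ} (h : (n : ℤ) < r) : B n r = 0 := by
  rw [B, if_neg]; omega

lemma B_coe (n r : ℕ) (h : r ≤ n) : B n r = Pp (n - r) r * (DD r)⁻¹ := by
  rw [B, if_pos (by constructor <;> omega)]
  simp

lemma B_mul_DD (n r : ℕ) (h : r ≤ n) : B n r * DD r = Pp (n - r) r := by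
  rw [B_coe n r h, mul_assoc, PowerSeries.inv_mul_cancel _ (by rw [constDD]; exact one_ne_zero), mul_one]

lemma B_zero (n : ℕ) : B n 0 = 1 := by
  have h := B_mul_DD n 0 (Nat.zero_le n)
  rw [DD, Pp_zero, mul_one] at h
  simpa [Pp_zero] using h

lemma B_self (n : ℕ) : B n (n : ℤ) = 1 := by
  have h := B_mul_DD n n le_rfl
  have : Pp (n - n) n = DD n := by rw [Nat.sub_self]; rfl
  rw [this] at h
  exact mul_right_cancel₀ (DD_ne n) (by rw [h, one_mul])

/-! ### ring identities in characteristic two -/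

lemma ringE0 {R : Type} [CommRing R] (hh : (2:R) = 0) (q : R) :
    1 + q * q = (1 + q) * (1 + q) := by linear_combination (-q) * hh

lemma ringE1 {R : Type} [CommRing R] (hh : (2:R) = 0) (q t : R) :
    1 + q * q * t = q * (1 + t) + (1 + q * t) * (1 + q) := by
  linear_combination (-q - q*t) * hh

lemma ringE2 {R : Type} [CommRing R] (hh : (2:R) = 0) (q t : R) :
    (1 + q*t) * (1 + q*q*t) = (1 + q*t) * ((1 + q*t) * (1 + q)) + q * ((1 + t) * (1 + q*t)) := by
  linear_combination (-q - q*t - q^2*t - q^2*t^2) * hh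

lemma ringE3 {R : Type} [CommRing R] (hh : (2:R) = 0) (q A Bv : R) :
    (1 + q^3*A*Bv) * (1 + q^4*A*Bv)
      = q^2*Bv * ((1 + q*A) * (1 + q^2*A))
        + (1 + q^3*A*Bv) * ((1 + q^2*A) * (1 + q^2*Bv))
        + q^2*A * ((1 + q*Bv) * (1 + q^2*Bv)) := by
  linear_combination (-(q^2*Bv) - q^2*A - q^3*A*Bv - q^4*A*Bv - q^5*A*Bv^2 - q^5*A^2*Bv) * hh


/-- helper for index juggling -/
lemma QpE {a b c : ℕ} (h : a = b + c) : Qp a = Qp b * Qp c := by rw [h, Qp_add]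

theorem Brec (N m : ℕ) (hm : m ≤ 2*N + 2) :
    B (2*N + 2) m = Qp m * B (2*N) m + (1 + Qp (2*N + 1)) * B (2*N) ((m:ℤ) - 1)
      + Qp (2*N + 2 - m) * B (2*N) ((m:ℤ) - 2) := by
  rcases Nat.lt_or_ge m 2 with hm2 | hm2
  · interval_cases m
    · -- m = 0
      rw [show ((0:ℕ):ℤ) - 1 = -1 by norm_num, show ((0:ℕ):ℤ) - 2 = -2 by norm_num,
        B_neg (show (-1:ℤ) < 0 by norm_num), B_neg (show (-2:ℤ) < 0 by norm_num)]
      rw [Nat.cast_zero, B_zero, B_zero, Qp_zero]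
      ring
    · -- m = 1
      rw [show ((1:ℕ):ℤ) - 1 = 0 by norm_num, show ((1:ℕ):ℤ) - 2 = -1 by norm_num,
        B_neg (show (-1:ℤ) < 0 by norm_num), B_zero, mul_zero, add_zero, mul_one]
      rcases Nat.eq_zero_or_pos N with h0 | h0
      · subst h0
        rw [show 2*0+2 = 2 by norm_num, show 2*0 = 0 by norm_num, show 2*0+1 = 1 by norm_num]
        rw [B_big (show ((0:ℕ):ℤ) < ((1:ℕ):ℤ) by norm_num), mul_zero, zero_add]
        apply mul_right_cancel₀ (DD_ne 1)
        rw [B_mul_DD 2 1 (by norm_num)]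
        rw [show (2:ℕ) - 1 = 1 by norm_num, Pp_one, DD, Pp_one]
        rw [show (1:ℕ)+1 = 2 by norm_num, show (0:ℕ)+1 = 1 by norm_num,
          QpE (show (2:ℕ) = 1 + 1 by norm_num)]
        exact ringE0 h2 (Qp 1)
      · apply mul_right_cancel₀ (DD_ne 1)
        rw [add_mul, mul_assoc (Qp 1), B_mul_DD (2*N+2) 1 (by omega), B_mul_DD (2*N) 1 (by omega)]
        rw [show 2*N+2-1 = 2*N+1 by omega, show 2*N-1 = 2*(N-1)+1 by omega, Pp_one, Pp_one]
        rw [DD, Pp_one]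
        rw [show 2*(N-1)+1+1 = 2*N by omega, show 2*N+1+1 = 2*N+2 by omega,
          show (0:ℕ)+1 = 1 by norm_num]
        rw [QpE (show 2*N+2 = 1 + (2*N+1) by omega), QpE (show 2*N+1 = 1 + (2*N) by omega)]
        linear_combination ringE1 h2 (Qp 1) (Qp (2*N))
  · rcases Nat.lt_or_ge (2*N) m with hgt | hle
    · rcases (show m = 2*N+1 ∨ m = 2*N+2 by omega) with h | h
      · -- m = 2N+1
        subst h
        have hN : 1 ≤ N := by omega
        rw [show ((2*N+1:ℕ):ℤ) - 1 = ((2*N:ℕ):ℤ) by push_cast; ring,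
            show ((2*N+1:ℕ):ℤ) - 2 = ((2*N-1:ℕ):ℤ) by push_cast [hN]; omega,
            B_big (show ((2*N:ℕ):ℤ) < ((2*N+1:ℕ):ℤ) by push_cast; omega),
            mul_zero, zero_add, B_self, mul_one,
            show 2*N+2-(2*N+1) = 1 by omega]
        apply mul_right_cancel₀ (DD_ne (2*N+1))
        rw [add_mul, mul_assoc (Qp 1), B_mul_DD (2*N+2) (2*N+1) (by omega)]
        rw [show 2*N+2-(2*N+1) = 1 by omega]
        have hb : B (2*N) ((2*N-1:ℕ)) * DD (2*N-1) = Pp 1 (2*N-1) := by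
          have h := B_mul_DD (2*N) (2*N-1) (by omega)
          rw [show 2*N-(2*N-1) = 1 by omega] at h
          exact h
        have hDD : DD (2*N+1) = DD (2*N-1) * ((1 + Qp (2*N)) * (1 + Qp (2*N+1))) := by
          have h := Pp_add 0 (2*N-1) 2
          rw [show 2*N-1+2 = 2*N+1 by omega, Pp_two, show 0+(2*N-1)+1 = 2*N by omega,
            show 0+(2*N-1)+2 = 2*N+1 by omega] at h
          exact h
        have hP : Pp 1 (2*N+1) = Pp 1 (2*N-1) * ((1 + Qp (2*N+1)) * (1 + Qp (2*N+2))) := by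
          have h := Pp_add 1 (2*N-1) 2
          rw [show 2*N-1+2 = 2*N+1 by omega, Pp_two, show 1+(2*N-1)+1 = 2*N+1 by omega,
            show 1+(2*N-1)+2 = 2*N+2 by omega] at h
          exact h
        have hRel : (1 + Qp 1) * Pp 1 (2*N-1) = DD (2*N-1) * (1 + Qp (2*N)) := by
          have ha := Pp_add 0 1 (2*N-1)
          have hb' := Pp_add 0 (2*N-1) 1
          rw [show (1:ℕ)+(2*N-1) = 2*N by omega, Pp_one, show (0:ℕ)+1 = 1 by norm_num] at ha
          rw [show 2*N-1+1 = 2*N by omega, Pp_one, show 0+(2*N-1)+1 = 2*N by omega] at hb'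
          rw [← ha, hb']
          rfl
        rw [hDD, hP]
        rw [QpE (show 2*N+2 = 1 + (2*N+1) by omega), QpE (show 2*N+1 = 1 + (2*N) by omega)]
        linear_combination ((1 + Qp 1 * Qp (2*N))^2) * hRel
          - (Qp 1 * ((1 + Qp (2*N)) * (1 + Qp 1 * Qp (2*N)))) * hb
          + (Pp 1 (2*N-1) * (-(Qp 1) - Qp 1 * Qp (2*N) - Qp 1^2 * Qp (2*N) - Qp 1^2 * Qp (2*N)^2)) * h2
      · -- m = 2N+2
        subst h
        rw [show ((2*N+2:ℕ):ℤ) - 1 = ((2*N+1:ℕ):ℤ) by push_cast; ring,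
            show ((2*N+2:ℕ):ℤ) - 2 = ((2*N:ℕ):ℤ) by push_cast; ring,
            B_big (show ((2*N:ℕ):ℤ) < ((2*N+2:ℕ):ℤ) by push_cast; omega),
            B_big (show ((2*N:ℕ):ℤ) < ((2*N+1:ℕ):ℤ) by push_cast; omega),
            B_self, Nat.sub_self, Qp_zero, B_self]
        ring
    · -- generic 2 ≤ m ≤ 2N
      have hc1 : ((m:ℤ) - 1) = ((m-1 : ℕ) : ℤ) := by omega
      have hc2 : ((m:ℤ) - 2) = ((m-2 : ℕ) : ℤ) := by omega
      rw [hc1, hc2]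
      apply mul_right_cancel₀ (DD_ne m)
      rw [add_mul, add_mul, mul_assoc (Qp m), B_mul_DD (2*N+2) m (by omega),
        B_mul_DD (2*N) m (by omega)]
      have hb1 : B (2*N) ((m-1:ℕ)) * DD m = Pp (2*N-m+1) (m-1) * (1 + Qp m) := by
        have hDD1 : DD m = DD (m-1) * (1 + Qp m) := by
          have h := Pp_add 0 (m-1) 1
          rw [show m-1+1 = m by omega, Pp_one, show 0+(m-1)+1 = m by omega] at h
          exact h
        have h := B_mul_DD (2*N) (m-1) (by omega)
        rw [show 2*N-(m-1) = 2*N-m+1 by omega] at h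
        rw [hDD1, ← mul_assoc, h]
      have hb2 : B (2*N) ((m-2:ℕ)) * DD m = Pp (2*N-m+2) (m-2) * ((1 + Qp (m-1)) * (1 + Qp m)) := by
        have hDD2 : DD m = DD (m-2) * ((1 + Qp (m-1)) * (1 + Qp m)) := by
          have h := Pp_add 0 (m-2) 2
          rw [show m-2+2 = m by omega, Pp_two, show 0+(m-2)+1 = m-1 by omega,
            show 0+(m-2)+2 = m by omega] at h
          exact h
        have h := B_mul_DD (2*N) (m-2) (by omega)
        rw [show 2*N-(m-2) = 2*N-m+2 by omega] at h
        rw [hDD2, ← mul_assoc, h]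
      have hP0 : Pp (2*N-m+2) m = Pp (2*N-m+2) (m-2) * ((1 + Qp (2*N+1)) * (1 + Qp (2*N+2))) := by
        have h := Pp_add (2*N-m+2) (m-2) 2
        rw [show m-2+2 = m by omega, Pp_two, show 2*N-m+2+(m-2)+1 = 2*N+1 by omega,
          show 2*N-m+2+(m-2)+2 = 2*N+2 by omega] at h
        exact h
      have hP1 : Pp (2*N-m) m = ((1 + Qp (2*N-m+1)) * (1 + Qp (2*N-m+2))) * Pp (2*N-m+2) (m-2) := by
        have h := Pp_add (2*N-m) 2 (m-2)
        rw [show 2+(m-2) = m by omega, Pp_two] at h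
        exact h
      have hP2 : Pp (2*N-m+1) (m-1) = (1 + Qp (2*N-m+2)) * Pp (2*N-m+2) (m-2) := by
        have h := Pp_add (2*N-m+1) 1 (m-2)
        rw [show 1+(m-2) = m-1 by omega, Pp_one, show 2*N-m+1+1 = 2*N-m+2 by omega] at h
        rw [h]
      rw [hP2] at hb1
      rw [show 2*N+2-m = 2*N-m+2 by omega, hP0, hP1]
      rw [QpE (show 2*N-m+2 = (2*N-m) + 2 by omega), QpE (show m = (m-2)+2 by omega),
        QpE (show (2:ℕ) = 1+1 by norm_num)] at hb1
      rw [QpE (show m = (m-2)+2 by omega), QpE (show m-1 = (m-2) + 1 by omega),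
        QpE (show (2:ℕ) = 1+1 by norm_num)] at hb2
      rw [QpE (show 2*N+2 = (2*N-m) + (m+2) by omega), QpE (show 2*N+1 = (2*N-m) + (m+1) by omega),
        QpE (show 2*N-m+2 = (2*N-m) + 2 by omega), QpE (show 2*N-m+1 = (2*N-m) + 1 by omega),
        QpE (show m+2 = (m-2) + 4 by omega), QpE (show m+1 = (m-2) + 3 by omega),
        QpE (show m = (m-2) + 2 by omega),
        QpE (show (4:ℕ) = 1+3 by norm_num), QpE (show (3:ℕ) = 1+2 by norm_num),
        QpE (show (2:ℕ) = 1+1 by norm_num)]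
      linear_combination (-(1 + Qp 1^3 * Qp (2*N-m) * Qp (m-2))) * hb1
        + (-(Qp 1^2 * Qp (2*N-m))) * hb2
        + (Pp (2*N-m+2) (m-2) * (-(Qp 1^2 * Qp (m-2)) - Qp 1^2 * Qp (2*N-m)
            - Qp 1^3 * Qp (2*N-m) * Qp (m-2) - Qp 1^4 * Qp (2*N-m) * Qp (m-2)
            - Qp 1^5 * Qp (2*N-m) * Qp (m-2)^2 - Qp 1^5 * Qp (2*N-m)^2 * Qp (m-2))) * h2

end FiveCore

namespace FiveCore2
open FiveCore

/-! ### the finite Jacobi triple product -/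

noncomputable def eps (r : ℕ) (j : ℤ) : ℕ := (5*j^2 + (r:ℤ)*j).toNat

lemma eps_nonneg (r : ℕ) (hr : (r:ℤ) ≤ 5) (j : ℤ) : (0:ℤ) ≤ 5*j^2 + (r:ℤ)*j := by
  rcases le_or_gt 0 j with h | h
  · positivity
  · nlinarith [sq_nonneg j, sq_nonneg (j+1)]

lemma Xmul {e1 e2 e3 : ℕ} (h : e1 + e2 = e3) : (X:S)^e1 * X^e2 = X^e3 := by
  rw [← pow_add, h]

noncomputable def SB (r N : ℕ) : S :=
  ∑ j ∈ Finset.Icc (-(N:ℤ)) (N:ℤ), B (2*N) ((N:ℤ)+j) * X ^ (eps r j)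

noncomputable def PR (r N : ℕ) : S :=
  ∏ j ∈ Finset.Icc 1 N, ((1 + (X:S)^(10*j-5+r)) * (1 + (X:S)^(10*j-(5+r))))

theorem JTP (r : ℕ) (hr1 : 1 ≤ r) (hr4 : r ≤ 4) (N : ℕ) : SB r N = PR r N := by
  induction N with
  | zero =>
      rw [SB, PR]
      norm_num
      rw [B_zero, one_mul, eps]
      norm_num
  | succ N ih =>
      have hstep : PR r (N+1) = PR r N * ((1 + (X:S)^(10*N+5+r)) * (1 + (X:S)^(10*N+5-r))) := by
        rw [PR, PR, Finset.prod_Icc_succ_top (by omega : 1 ≤ N+1)]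
        rw [show 10*(N+1)-5+r = 10*N+5+r by omega, show 10*(N+1)-(5+r) = 10*N+5-r by omega]
      rw [hstep, ← ih]
      -- expand RHS into four sums
      have hRHS : SB r N * ((1 + (X:S)^(10*N+5+r)) * (1 + (X:S)^(10*N+5-r)))
          = (∑ k ∈ Finset.Icc (-(N:ℤ)) (N:ℤ), B (2*N) ((N:ℤ)+k) * X ^ (eps r k))
            + ((∑ k ∈ Finset.Icc (-(N:ℤ)) (N:ℤ), B (2*N) ((N:ℤ)+k) * X ^ (eps r k + (20*N+10)))
            + ((∑ k ∈ Finset.Icc (-(N:ℤ)) (N:ℤ), B (2*N) ((N:ℤ)+k) * X ^ (eps r k + (10*N+5-r)))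
            + (∑ k ∈ Finset.Icc (-(N:ℤ)) (N:ℤ), B (2*N) ((N:ℤ)+k) * X ^ (eps r k + (10*N+5+r))))) := by
        rw [SB, Finset.sum_mul, ← Finset.sum_add_distrib, ← Finset.sum_add_distrib,
          ← Finset.sum_add_distrib]
        apply Finset.sum_congr rfl
        intro k _
        rw [← Xmul (rfl : eps r k + (20*N+10) = eps r k + (20*N+10)),
            ← Xmul (rfl : eps r k + (10*N+5-r) = eps r k + (10*N+5-r)),
            ← Xmul (rfl : eps r k + (10*N+5+r) = eps r k + (10*N+5+r))]
        have h20 : (X:S)^(20*N+10) = X^(10*N+5+r) * X^(10*N+5-r) := Xmul (by omega) |>.symm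
        rw [h20]
        ring
      rw [hRHS]
      -- expand LHS via Brec
      have hL : SB r (N+1) = ∑ j ∈ Finset.Icc (-(N:ℤ)-1) ((N:ℤ)+1),
          (Qp (((N:ℤ)+1+j).toNat) * B (2*N) ((N:ℤ)+1+j)
            + (1 + Qp (2*N+1)) * B (2*N) ((N:ℤ)+j)
            + Qp (2*N+2 - ((N:ℤ)+1+j).toNat) * B (2*N) ((N:ℤ)+j-1)) * X ^ (eps r j) := by
        rw [SB, show (-(↑(N+1):ℤ)) = -(N:ℤ)-1 by push_cast; ring,
          show ((↑(N+1):ℤ)) = (N:ℤ)+1 by push_cast; ring]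
        apply Finset.sum_congr rfl
        intro j hj
        rw [Finset.mem_Icc] at hj
        congr 1
        have h0 : (0:ℤ) ≤ (N:ℤ)+1+j := by omega
        obtain ⟨m, hm⟩ : ∃ m : ℕ, ((N:ℤ)+1+j) = (m:ℤ) := ⟨((N:ℤ)+1+j).toNat, by omega⟩
        have hmn : m ≤ 2*N+2 := by omega
        rw [show 2*(N+1) = 2*N+2 by omega, hm, Int.toNat_natCast,
          show (N:ℤ)+j = (m:ℤ)-1 by omega, show (m:ℤ)-1-1 = (m:ℤ)-2 by ring]
        exact Brec N m hmn
      -- exponent-shift lemmas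
      have epsDown : ∀ k : ℤ, -(N:ℤ) ≤ k →
          10 * (((N:ℤ)+k).toNat) + eps r (k-1) = eps r k + (10*N+5-r) := by
        intro k hk
        have e1 : ((eps r (k-1) : ℕ) : ℤ) = 5*(k-1)^2 + (r:ℤ)*(k-1) :=
          Int.toNat_of_nonneg (eps_nonneg r (by omega) (k-1))
        have e2 : ((eps r k : ℕ) : ℤ) = 5*k^2 + (r:ℤ)*k :=
          Int.toNat_of_nonneg (eps_nonneg r (by omega) k)
        have e3 : ((((N:ℤ)+k).toNat : ℕ) : ℤ) = (N:ℤ)+k := Int.toNat_of_nonneg (by omega)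
        have hb : r ≤ 10*N+5 := by omega
        zify [hb]
        rw [e1, e2, e3]
        push_cast
        ring
      have epsUp : ∀ k : ℤ, -(N:ℤ) ≤ k → k ≤ (N:ℤ) →
          10 * (2*N+2 - (((N:ℤ)+k+2).toNat)) + eps r (k+1) = eps r k + (10*N+5+r) := by
        intro k hk0 hk
        have e1 : ((eps r (k+1) : ℕ) : ℤ) = 5*(k+1)^2 + (r:ℤ)*(k+1) :=
          Int.toNat_of_nonneg (eps_nonneg r (by omega) (k+1))
        have e2 : ((eps r k : ℕ) : ℤ) = 5*k^2 + (r:ℤ)*k :=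
          Int.toNat_of_nonneg (eps_nonneg r (by omega) k)
        have e3 : ((((N:ℤ)+k+2).toNat : ℕ) : ℤ) = (N:ℤ)+k+2 := Int.toNat_of_nonneg (by omega)
        have hb : ((N:ℤ)+k+2).toNat ≤ 2*N+2 := by omega
        zify [hb]
        rw [e1, e2, e3]
        push_cast
        ring
      -- the three partial sums
      have hU1 : (∑ j ∈ Finset.Icc (-(N:ℤ)-1) ((N:ℤ)+1),
            Qp (((N:ℤ)+1+j).toNat) * B (2*N) ((N:ℤ)+1+j) * X ^ (eps r j))
          = ∑ k ∈ Finset.Icc (-(N:ℤ)) (N:ℤ), B (2*N) ((N:ℤ)+k) * X ^ (eps r k + (10*N+5-r)) := by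
        rw [← Finset.sum_subset (Finset.Icc_subset_Icc (by omega : -(N:ℤ)-1 ≤ -(N:ℤ)-1) (by omega : (N:ℤ)-1 ≤ (N:ℤ)+1))
          (by
            intro x hx hnx
            rw [Finset.mem_Icc] at hx
            rw [Finset.mem_Icc] at hnx
            have : (2*N : ℤ) < (N:ℤ)+1+x := by push_cast; omega
            rw [B_big this, mul_zero, zero_mul])]
        rw [show Finset.Icc (-(N:ℤ)-1) ((N:ℤ)-1)
              = (Finset.Icc (-(N:ℤ)) (N:ℤ)).map (addRightEmbedding (-1)) by
            rw [Finset.map_add_right_Icc]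
            congr 1 <;> ring]
        rw [Finset.sum_map]
        apply Finset.sum_congr rfl
        intro k hk
        rw [Finset.mem_Icc] at hk
        simp only [addRightEmbedding_apply]
        rw [show (N:ℤ)+1+(k + -1) = (N:ℤ)+k by ring, show k + -1 = k - 1 by ring]
        calc Qp (((N:ℤ)+k).toNat) * B (2*N) ((N:ℤ)+k) * X ^ (eps r (k-1))
            = B (2*N) ((N:ℤ)+k) * ((X:S) ^ (10 * (((N:ℤ)+k).toNat)) * X ^ (eps r (k-1))) := by
              rw [Qp]; ring
          _ = B (2*N) ((N:ℤ)+k) * X ^ (eps r k + (10*N+5-r)) := by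
              rw [Xmul (epsDown k hk.1)]
      have hU3 : (∑ j ∈ Finset.Icc (-(N:ℤ)-1) ((N:ℤ)+1),
            Qp (2*N+2 - ((N:ℤ)+1+j).toNat) * B (2*N) ((N:ℤ)+j-1) * X ^ (eps r j))
          = ∑ k ∈ Finset.Icc (-(N:ℤ)) (N:ℤ), B (2*N) ((N:ℤ)+k) * X ^ (eps r k + (10*N+5+r)) := by
        rw [← Finset.sum_subset (Finset.Icc_subset_Icc (by omega : -(N:ℤ)-1 ≤ -(N:ℤ)+1) (by omega : (N:ℤ)+1 ≤ (N:ℤ)+1))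
          (by
            intro x hx hnx
            rw [Finset.mem_Icc] at hx
            rw [Finset.mem_Icc] at hnx
            have : ((N:ℤ)+x-1) < 0 := by omega
            rw [B_neg this, mul_zero, zero_mul])]
        rw [show Finset.Icc (-(N:ℤ)+1) ((N:ℤ)+1)
              = (Finset.Icc (-(N:ℤ)) (N:ℤ)).map (addRightEmbedding 1) by
            rw [Finset.map_add_right_Icc]]
        rw [Finset.sum_map]
        apply Finset.sum_congr rfl
        intro k hk
        rw [Finset.mem_Icc] at hk
        simp only [addRightEmbedding_apply]
        rw [show (N:ℤ)+1+(k + 1) = (N:ℤ)+k+2 by ring, show (N:ℤ)+(k+1)-1 = (N:ℤ)+k by ring]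
        calc Qp (2*N+2 - ((N:ℤ)+k+2).toNat) * B (2*N) ((N:ℤ)+k) * X ^ (eps r (k+1))
            = B (2*N) ((N:ℤ)+k) * ((X:S) ^ (10 * (2*N+2 - ((N:ℤ)+k+2).toNat)) * X ^ (eps r (k+1))) := by
              rw [Qp]; ring
          _ = B (2*N) ((N:ℤ)+k) * X ^ (eps r k + (10*N+5+r)) := by
              rw [Xmul (epsUp k hk.1 hk.2)]
      have hU2 : (∑ j ∈ Finset.Icc (-(N:ℤ)-1) ((N:ℤ)+1),
            (1 + Qp (2*N+1)) * B (2*N) ((N:ℤ)+j) * X ^ (eps r j))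
          = (∑ k ∈ Finset.Icc (-(N:ℤ)) (N:ℤ), B (2*N) ((N:ℤ)+k) * X ^ (eps r k))
            + ∑ k ∈ Finset.Icc (-(N:ℤ)) (N:ℤ), B (2*N) ((N:ℤ)+k) * X ^ (eps r k + (20*N+10)) := by
        rw [← Finset.sum_subset (Finset.Icc_subset_Icc (by omega : -(N:ℤ)-1 ≤ -(N:ℤ)) (by omega : (N:ℤ) ≤ (N:ℤ)+1))
          (by
            intro x hx hnx
            rw [Finset.mem_Icc] at hx
            rw [Finset.mem_Icc] at hnx
            rcases (show x = -(N:ℤ)-1 ∨ x = (N:ℤ)+1 by omega) with h | h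
            · rw [h, show (N:ℤ) + (-(N:ℤ)-1) = -1 by ring, B_neg (by norm_num), mul_zero, zero_mul]
            · rw [h, B_big (by push_cast; omega), mul_zero, zero_mul])]
        rw [← Finset.sum_add_distrib]
        apply Finset.sum_congr rfl
        intro k _
        have : (X:S) ^ (eps r k + (20*N+10)) = X ^ (eps r k) * X ^ (10*(2*N+1)) :=
          (Xmul (by ring)).symm
        rw [this, Qp]
        ring
      rw [hL]
      rw [show (∑ j ∈ Finset.Icc (-(N:ℤ)-1) ((N:ℤ)+1),
          (Qp (((N:ℤ)+1+j).toNat) * B (2*N) ((N:ℤ)+1+j)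
            + (1 + Qp (2*N+1)) * B (2*N) ((N:ℤ)+j)
            + Qp (2*N+2 - ((N:ℤ)+1+j).toNat) * B (2*N) ((N:ℤ)+j-1)) * X ^ (eps r j))
          = (∑ j ∈ Finset.Icc (-(N:ℤ)-1) ((N:ℤ)+1),
              Qp (((N:ℤ)+1+j).toNat) * B (2*N) ((N:ℤ)+1+j) * X ^ (eps r j))
            + ((∑ j ∈ Finset.Icc (-(N:ℤ)-1) ((N:ℤ)+1),
              (1 + Qp (2*N+1)) * B (2*N) ((N:ℤ)+j) * X ^ (eps r j))
            + (∑ j ∈ Finset.Icc (-(N:ℤ)-1) ((N:ℤ)+1),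
              Qp (2*N+2 - ((N:ℤ)+1+j).toNat) * B (2*N) ((N:ℤ)+j-1) * X ^ (eps r j)))
          from by
            rw [← Finset.sum_add_distrib, ← Finset.sum_add_distrib]
            exact Finset.sum_congr rfl (fun j _ => by ring)]
      rw [hU1, hU2, hU3]
      ring
end FiveCore2

namespace FiveCore2
open FiveCore

/-! ### congruence toolkit extras -/

lemma Cg.mono {k k' : ℕ} {a b : S} (h : k' ≤ k) (hc : Cg k a b) : Cg k' a b :=
  dvd_trans (pow_dvd_pow _ h) hc

lemma Cg.sum {k : ℕ} {ι : Type} {s : Finset ι} {f g : ι → S}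
    (h : ∀ i ∈ s, Cg k (f i) (g i)) : Cg k (∑ i ∈ s, f i) (∑ i ∈ s, g i) := by
  rw [Cg, ← Finset.sum_sub_distrib]
  exact Finset.dvd_sum h

lemma Cg_Pp (a b k : ℕ) (hk : k ≤ 10*(a+1)) : Cg k (Pp a b) 1 := by
  have h : Cg k (∏ i ∈ Finset.range b, (1 + Qp (a+1+i))) (∏ _i ∈ Finset.range b, (1:S)) := by
    apply Cg.prod
    intro i _
    rw [Qp]
    exact Cg.one_add_pow (le_trans hk (by omega))
  rwa [Finset.prod_const_one] at h

lemma abs_le_eps (r : ℕ) (hr1 : 1 ≤ r) (hr4 : r ≤ 4) (j : ℤ) :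
    (j.natAbs : ℤ) ≤ 5*j^2 + (r:ℤ)*j := by
  rcases le_or_gt 0 j with h | h
  · rw [Int.natAbs_of_nonneg h]
    nlinarith [sq_nonneg j]
  · rw [show (j.natAbs : ℤ) = -j by omega]
    nlinarith [sq_nonneg (j+1), sq_nonneg j]

lemma BDD_cong (N : ℕ) (j : ℤ) (hj1 : -(N:ℤ) ≤ j) (hj2 : j ≤ (N:ℤ)) (k : ℕ)
    (hk : k ≤ 10*(N + 1) - 10*(j.natAbs)) :
    Cg k (B (2*N) ((N:ℤ)+j) * DD N) 1 := by
  obtain ⟨t, ht⟩ : ∃ t : ℕ, ((N:ℤ)+j) = (t:ℤ) := ⟨((N:ℤ)+j).toNat, by omega⟩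
  have ht2 : t ≤ 2*N := by omega
  rw [ht, B_coe (2*N) t ht2, mul_assoc]
  have hNum : Cg k (Pp (2*N - t) t) 1 := Cg_Pp _ _ _ (by omega)
  rcases le_or_gt t N with hcase | hcase
  · -- t ≤ N : (DD t)⁻¹ * DD N = Pp t (N - t)
    have hDD : DD N = DD t * Pp t (N - t) := by
      have h := Pp_add 0 t (N - t)
      rw [show t + (N - t) = N by omega, show 0 + t = t by omega] at h
      exact h
    have hId : (DD t)⁻¹ * DD N = Pp t (N - t) := by
      rw [hDD, ← mul_assoc, PowerSeries.inv_mul_cancel _ (by rw [constDD]; exact one_ne_zero),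
        one_mul]
    rw [hId]
    have hV : Cg k (Pp t (N - t)) 1 := Cg_Pp _ _ _ (by omega)
    have := Cg.mul hNum hV
    rwa [mul_one] at this
  · -- t > N
    have hu : constantCoeff (R := ZMod 2) (Pp N (t - N)) ≠ 0 := by
      rw [constPp]; exact one_ne_zero
    have hDD : DD t = DD N * Pp N (t - N) := by
      have h := Pp_add 0 N (t - N)
      rw [show N + (t - N) = t by omega, show 0 + N = N by omega] at h
      exact h
    have hId : (DD t)⁻¹ * DD N = (Pp N (t - N))⁻¹ := by
      apply mul_right_cancel₀ (Pp_ne N (t - N))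
      rw [mul_assoc, ← hDD]
      rw [PowerSeries.inv_mul_cancel _ (by rw [constDD]; exact one_ne_zero)]
      rw [PowerSeries.inv_mul_cancel _ hu]
    rw [hId]
    have hV : Cg k ((Pp N (t - N))⁻¹) 1 := by
      apply Cg.inv_one _ hu
      exact Cg_Pp _ _ _ (by omega)
    have := Cg.mul hNum hV
    rwa [mul_one] at this

/-! ### the theta series -/

noncomputable def Er (r : ℕ) : S :=
  PowerSeries.mk fun n => ∑ j ∈ Finset.Icc (-(n:ℤ)) (n:ℤ), (if eps r j = n then 1 else 0 : ZMod 2)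

theorem Er_cong (r : ℕ) (hr1 : 1 ≤ r) (hr4 : r ≤ 4) (n : ℕ) :
    Cg (n+1) (Er r) (PR r (2*n+2) * DD (2*n+2)) := by
  set N := 2*n+2 with hN
  rw [← JTP r hr1 hr4 N, SB, Finset.sum_mul]
  have step1 : Cg (n+1) (∑ j ∈ Finset.Icc (-(N:ℤ)) (N:ℤ), X ^ (eps r j))
      (∑ j ∈ Finset.Icc (-(N:ℤ)) (N:ℤ), B (2*N) ((N:ℤ)+j) * X ^ (eps r j) * DD N) := by
    apply Cg.sum
    intro j hj
    rw [Finset.mem_Icc] at hj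
    rcases le_or_gt (eps r j) n with he | he
    · -- small exponent: |j| ≤ n
      have habs : (j.natAbs : ℤ) ≤ (n:ℤ) := by
        have h1 := abs_le_eps r hr1 hr4 j
        have h2 : ((eps r j : ℕ) : ℤ) = 5*j^2 + (r:ℤ)*j :=
          Int.toNat_of_nonneg (eps_nonneg r (by omega) j)
        omega
      have hBD : Cg (n+1) (B (2*N) ((N:ℤ)+j) * DD N) 1 :=
        BDD_cong N j hj.1 hj.2 (n+1) (by omega)
      have := Cg.mul (Cg.refl (n+1) ((X:S) ^ (eps r j))) hBD
      rw [mul_one] at this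
      have heq : B (2*N) ((N:ℤ)+j) * X ^ (eps r j) * DD N
          = X ^ (eps r j) * (B (2*N) ((N:ℤ)+j) * DD N) := by ring
      rw [heq]
      exact this.symm
    · -- large exponent
      rw [Cg]
      have : (X:S) ^ (eps r j) - B (2*N) ((N:ℤ)+j) * X ^ (eps r j) * DD N
          = (1 - B (2*N) ((N:ℤ)+j) * DD N) * X ^ (eps r j) := by ring
      rw [this]
      exact Dvd.dvd.mul_left (pow_dvd_pow _ (by omega)) _
  have step2 : Cg (n+1) (Er r) (∑ j ∈ Finset.Icc (-(N:ℤ)) (N:ℤ), X ^ (eps r j)) := by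
    apply Cg.of_coeff
    intro m hm
    rw [Er, PowerSeries.coeff_mk, map_sum]
    have hc : ∀ j : ℤ, (PowerSeries.coeff (R := ZMod 2) m) ((X:S) ^ (eps r j))
        = (if eps r j = m then 1 else 0 : ZMod 2) := by
      intro j
      rw [PowerSeries.coeff_X_pow]
      by_cases h : eps r j = m
      · rw [if_pos h, if_pos h.symm]
      · rw [if_neg h, if_neg (fun hh => h hh.symm)]
    rw [Finset.sum_congr rfl (fun j _ => hc j)]
    apply Finset.sum_subset (Finset.Icc_subset_Icc (by omega) (by omega))
    intro x hx hnx
    rw [Finset.mem_Icc] at hx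
    rw [Finset.mem_Icc] at hnx
    rw [if_neg]
    intro hcon
    have h1 := abs_le_eps r hr1 hr4 x
    have h2 : ((eps r x : ℕ) : ℤ) = 5*x^2 + (r:ℤ)*x :=
      Int.toNat_of_nonneg (eps_nonneg r (by omega) x)
    omega
  exact step2.trans step1

end FiveCore2

namespace FiveCore3
open FiveCore FiveCore2

noncomputable def Pi1 (s : Finset ℕ) : S := ∏ m ∈ s, (1 + (X:S)^m)
noncomputable def PiE (N c : ℕ) : S := ∏ j ∈ Finset.Icc 1 N, (1 + (X:S)^(c*j))
def Bs (N : ℕ) : Finset ℕ := (Finset.Icc 1 N).filter fun m => Odd m ∧ ¬ (5 ∣ m)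
def As (N : ℕ) : Finset ℕ := (Finset.Icc 1 N).filter fun m => Odd m ∧ 5 ∣ m
noncomputable def CoreL (N : ℕ) : S := Pi1 (Finset.Icc 1 N) * Pi1 (Bs (10*N))
noncomputable def CoreR (N : ℕ) : S := PiE N 5

lemma Cg_Pi1_one {k : ℕ} {s : Finset ℕ} (h : ∀ m ∈ s, k ≤ m) : Cg k (Pi1 s) 1 := by
  have hh : Cg k (∏ m ∈ s, (1 + (X:S)^m)) (∏ _m ∈ s, (1:S)) :=
    Cg.prod (fun m hm => Cg.one_add_pow (h m hm))
  rwa [Finset.prod_const_one] at hh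

lemma prodsq (s : Finset ℕ) (e : ℕ → ℕ) :
    (∏ m ∈ s, (1+(X:S)^(e m))) * (∏ m ∈ s, (1+(X:S)^(e m))) = ∏ m ∈ s, (1+(X:S)^(2*(e m))) := by
  rw [← Finset.prod_mul_distrib]
  apply Finset.prod_congr rfl
  intro m _
  rw [← (ringE0 h2 ((X:S)^(e m))), Xmul (by ring : e m + e m = 2 * e m)]

lemma evenImg (N : ℕ) :
    (Finset.Icc 1 N).filter (fun m => ¬ Odd m) = (Finset.Icc 1 (N/2)).image (fun j => 2*j) := by
  ext m
  simp only [Finset.mem_filter, Finset.mem_Icc, Finset.mem_image, Nat.odd_iff]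
  constructor
  · rintro ⟨⟨h1, h2⟩, h3⟩
    exact ⟨m/2, by omega, by omega⟩
  · rintro ⟨j, hj, rfl⟩
    omega

lemma split_parity (N : ℕ) :
    Pi1 (Finset.Icc 1 N) = Pi1 (As N) * Pi1 (Bs N) * PiE (N/2) 2 := by
  rw [Pi1, ← Finset.prod_filter_mul_prod_filter_not (Finset.Icc 1 N) (fun m => Odd m)]
  rw [← Finset.prod_filter_mul_prod_filter_not ((Finset.Icc 1 N).filter (fun m => Odd m))
    (fun m => 5 ∣ m)]
  rw [Finset.filter_filter, Finset.filter_filter]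
  rw [evenImg, Finset.prod_image (by intro a _ b _ hab; simp only at hab; omega)]
  rw [As, Bs, Pi1, Pi1, PiE]

lemma oddImg5 (N : ℕ) :
    ((Finset.Icc 1 N).filter (fun m => Odd m)).image (fun k => 5*k) = As (5*N) := by
  ext m
  simp only [As, Finset.mem_filter, Finset.mem_Icc, Finset.mem_image, Nat.odd_iff]
  constructor
  · rintro ⟨k, hk, rfl⟩
    omega
  · rintro ⟨⟨h1, h2⟩, h3, h4⟩
    exact ⟨m/5, by omega, by omega⟩

lemma split_parity5 (N : ℕ) :
    CoreR N = Pi1 (As (5*N)) * PiE (N/2) 10 := by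
  rw [CoreR, PiE, ← Finset.prod_filter_mul_prod_filter_not (Finset.Icc 1 N) (fun m => Odd m)]
  congr 1
  · rw [← oddImg5, Pi1, Finset.prod_image (by intro a _ b _ hab; simp only at hab; omega)]
  · rw [evenImg, Finset.prod_image (by intro a _ b _ hab; simp only at hab; omega), PiE]
    apply Finset.prod_congr rfl
    intro j _
    rw [show 5*(2*j) = 10*j by ring]

lemma Pi1_split {s t : Finset ℕ} (h : s ⊆ t) : Pi1 t = Pi1 s * Pi1 (t \ s) := by
  rw [Pi1, Pi1, Pi1, ← Finset.prod_sdiff h, mul_comm]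

lemma Cg_sq {k : ℕ} {a b : S} (h : Cg k a b) : Cg (2*k) (a*a) (b*b) := by
  have hd : a*a - b*b = (a-b)*(a-b) + (2:S) * (b * (a - b)) := by ring
  rw [Cg, hd, h2, zero_mul, add_zero, two_mul, pow_add]
  exact mul_dvd_mul h h

lemma base01 (N : ℕ) (hN : 1 ≤ N) : Cg 2 (CoreL N) (CoreR N) := by
  have h1L : (1:ℕ) ∈ Finset.Icc 1 N := by rw [Finset.mem_Icc]; omega
  have h1B : (1:ℕ) ∈ Bs (10*N) := by
    rw [Bs, Finset.mem_filter, Finset.mem_Icc]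
    exact ⟨⟨le_refl 1, by omega⟩, odd_one, by omega⟩
  rw [CoreL, Pi1, Pi1, ← Finset.mul_prod_erase _ _ h1L, ← Finset.mul_prod_erase _ _ h1B]
  have hP' : Cg 2 (∏ m ∈ (Finset.Icc 1 N).erase 1, (1 + (X:S)^m)) 1 := by
    apply Cg_Pi1_one (s := (Finset.Icc 1 N).erase 1)
    intro m hm
    rw [Finset.mem_erase, Finset.mem_Icc] at hm
    omega
  have hQ' : Cg 2 (∏ m ∈ (Bs (10*N)).erase 1, (1 + (X:S)^m)) 1 := by
    apply Cg_Pi1_one (s := (Bs (10*N)).erase 1)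
    intro m hm
    rw [Finset.mem_erase, Bs, Finset.mem_filter, Finset.mem_Icc, Nat.odd_iff] at hm
    omega
  have hXX : Cg 2 ((1 + (X:S)^1) * (1 + (X:S)^1)) 1 := by
    rw [← (ringE0 h2 ((X:S)^1)), Xmul (by norm_num : 1+1 = 2)]
    exact Cg.one_add_pow (le_refl 2)
  have hCL : Cg 2 ((1 + (X:S)^1) * (∏ m ∈ (Finset.Icc 1 N).erase 1, (1 + (X:S)^m))
      * ((1 + (X:S)^1) * (∏ m ∈ (Bs (10*N)).erase 1, (1 + (X:S)^m)))) 1 := by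
    have hc := Cg.mul (Cg.mul hXX hP') hQ'
    rw [one_mul, one_mul] at hc
    have heq : (1 + (X:S)^1) * (∏ m ∈ (Finset.Icc 1 N).erase 1, (1 + (X:S)^m))
        * ((1 + (X:S)^1) * (∏ m ∈ (Bs (10*N)).erase 1, (1 + (X:S)^m)))
        = (1 + (X:S)^1) * (1 + (X:S)^1) * (∏ m ∈ (Finset.Icc 1 N).erase 1, (1 + (X:S)^m))
          * (∏ m ∈ (Bs (10*N)).erase 1, (1 + (X:S)^m)) := by ring
    rw [heq]
    exact hc
  have hCR : Cg 2 (CoreR N) 1 := by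
    rw [CoreR, PiE]
    have hh : Cg 2 (∏ j ∈ Finset.Icc 1 N, (1 + (X:S)^(5*j))) (∏ _j ∈ Finset.Icc 1 N, (1:S)) := by
      apply Cg.prod
      intro j hj
      rw [Finset.mem_Icc] at hj
      exact Cg.one_add_pow (by omega)
    rwa [Finset.prod_const_one] at hh
  exact hCL.trans hCR.symm

theorem core : ∀ n N : ℕ, n ≤ N → 2 ≤ N → Cg (n+1) (CoreL N) (CoreR N) := by
  intro n
  induction n using Nat.strong_induction_on with
  | _ n ih =>
    intro N hnN hN2
    rcases le_or_gt n 1 with hn1 | hn1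
    · exact Cg.mono (by omega) (base01 N (by omega))
    · -- n ≥ 2, N ≥ n
      have hIH : Cg (n/2+1) (CoreL (N/2)) (CoreR (N/2)) := by
        rcases le_or_gt (n/2) 1 with h | h
        · exact Cg.mono (by omega) (base01 (N/2) (by omega))
        · exact ih (n/2) (by omega) (N/2) (by omega) (by omega)
      -- half-L vs CoreL (N/2)
      have hBsub : Bs N ⊆ Bs (10*(N/2)) := by
        apply Finset.filter_subset_filter
        apply Finset.Icc_subset_Icc (le_refl 1)
        omega
      have htail1 : Cg (n/2+1) (Pi1 (Bs (10*(N/2)) \ Bs N)) 1 := by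
        apply Cg_Pi1_one
        intro m hm
        simp only [Finset.mem_sdiff, Bs, Finset.mem_filter, Finset.mem_Icc, Nat.odd_iff] at hm
        omega
      have hHL : Cg (n/2+1) (Pi1 (Bs N) * Pi1 (Finset.Icc 1 (N/2))) (CoreR (N/2)) := by
        have h1 : Cg (n/2+1) (CoreL (N/2)) (Pi1 (Bs N) * Pi1 (Finset.Icc 1 (N/2))) := by
          rw [CoreL, Pi1_split hBsub]
          have hc := Cg.mul (Cg.refl (n/2+1) (Pi1 (Finset.Icc 1 (N/2)) * Pi1 (Bs N))) htail1
          rw [mul_one] at hc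
          have heq : Pi1 (Finset.Icc 1 (N/2)) * (Pi1 (Bs N) * Pi1 (Bs (10*(N/2)) \ Bs N))
              = Pi1 (Finset.Icc 1 (N/2)) * Pi1 (Bs N) * Pi1 (Bs (10*(N/2)) \ Bs N) := by ring
          rw [heq]
          have heq2 : Pi1 (Bs N) * Pi1 (Finset.Icc 1 (N/2))
              = Pi1 (Finset.Icc 1 (N/2)) * Pi1 (Bs N) := by ring
          rw [heq2]
          exact hc
        exact h1.symm.trans hIH
      -- square it
      have hSq : Cg (n+1) ((Pi1 (Bs N) * Pi1 (Finset.Icc 1 (N/2))) * (Pi1 (Bs N) * Pi1 (Finset.Icc 1 (N/2))))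
          (CoreR (N/2) * CoreR (N/2)) := Cg.mono (by omega) (Cg_sq hHL)
      -- LHS chain
      have htailB : Cg (n+1) (Pi1 (Bs (10*N) \ Bs N)) 1 := by
        apply Cg_Pi1_one
        intro m hm
        simp only [Finset.mem_sdiff, Bs, Finset.mem_filter, Finset.mem_Icc, Nat.odd_iff] at hm
        omega
      have hBsubN : Bs N ⊆ Bs (10*N) := by
        apply Finset.filter_subset_filter
        apply Finset.Icc_subset_Icc (le_refl 1)
        omega
      have hLchain : Cg (n+1) (CoreL N)
          (Pi1 (As N) * ((Pi1 (Bs N) * Pi1 (Finset.Icc 1 (N/2))) * (Pi1 (Bs N) * Pi1 (Finset.Icc 1 (N/2))))) := by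
        rw [CoreL, split_parity N, Pi1_split hBsubN]
        have hPiE : PiE (N/2) 2 = Pi1 (Finset.Icc 1 (N/2)) * Pi1 (Finset.Icc 1 (N/2)) := by
          rw [Pi1, prodsq (Finset.Icc 1 (N/2)) (fun m => m), PiE]
        rw [hPiE]
        have hc := Cg.mul (Cg.refl (n+1)
          (Pi1 (As N) * Pi1 (Bs N) * (Pi1 (Finset.Icc 1 (N/2)) * Pi1 (Finset.Icc 1 (N/2))) * Pi1 (Bs N))) htailB
        rw [mul_one] at hc
        have heq : Pi1 (As N) * Pi1 (Bs N) * (Pi1 (Finset.Icc 1 (N/2)) * Pi1 (Finset.Icc 1 (N/2)))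
            * (Pi1 (Bs N) * Pi1 (Bs (10*N) \ Bs N))
            = Pi1 (As N) * Pi1 (Bs N) * (Pi1 (Finset.Icc 1 (N/2)) * Pi1 (Finset.Icc 1 (N/2))) * Pi1 (Bs N)
              * Pi1 (Bs (10*N) \ Bs N) := by ring
        rw [heq]
        have heq2 : Pi1 (As N) * ((Pi1 (Bs N) * Pi1 (Finset.Icc 1 (N/2))) * (Pi1 (Bs N) * Pi1 (Finset.Icc 1 (N/2))))
            = Pi1 (As N) * Pi1 (Bs N) * (Pi1 (Finset.Icc 1 (N/2)) * Pi1 (Finset.Icc 1 (N/2))) * Pi1 (Bs N) := by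
          ring
        rw [heq2]
        exact hc
      -- RHS chain
      have hAsub : As N ⊆ As (5*N) := by
        apply Finset.filter_subset_filter
        apply Finset.Icc_subset_Icc (le_refl 1)
        omega
      have htailA : Cg (n+1) (Pi1 (As (5*N) \ As N)) 1 := by
        apply Cg_Pi1_one
        intro m hm
        simp only [Finset.mem_sdiff, As, Finset.mem_filter, Finset.mem_Icc, Nat.odd_iff] at hm
        omega
      have hRchain : Cg (n+1) (CoreR N) (Pi1 (As N) * (CoreR (N/2) * CoreR (N/2))) := by
        rw [split_parity5 N, Pi1_split hAsub]
        have hPiE : PiE (N/2) 10 = CoreR (N/2) * CoreR (N/2) := by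
          rw [CoreR, PiE, PiE, prodsq (Finset.Icc 1 (N/2)) (fun m => 5*m)]
          apply Finset.prod_congr rfl
          intro j _
          rw [show 2*(5*j) = 10*j by ring]
        rw [hPiE]
        have hc := Cg.mul (Cg.refl (n+1) (Pi1 (As N) * (CoreR (N/2) * CoreR (N/2)))) htailA
        rw [mul_one] at hc
        have heq : Pi1 (As N) * Pi1 (As (5*N) \ As N) * (CoreR (N/2) * CoreR (N/2))
            = Pi1 (As N) * (CoreR (N/2) * CoreR (N/2)) * Pi1 (As (5*N) \ As N) := by ring
        rw [heq]
        exact hc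
      -- combine
      have hMid := Cg.mul (Cg.refl (n+1) (Pi1 (As N))) hSq
      exact (hLchain.trans hMid).trans hRchain.symm

end FiveCore3

namespace FiveCore4
open FiveCore FiveCore2 FiveCore3

lemma DD_PiE (N : ℕ) : DD N = PiE N 10 := by
  induction N with
  | zero => rw [DD, Pp_zero, PiE]; simp
  | succ N ih =>
      have h1 : DD (N+1) = DD N * (1 + Qp (N+1)) := by
        have h := Pp_succ 0 N
        rw [show 0+1+N = N+1 by omega] at h
        exact h
      rw [h1, ih, PiE, PiE, Finset.prod_Icc_succ_top (by omega : 1 ≤ N+1), Qp]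

lemma imgBs (r : ℕ) (hr : r = 1 ∨ r = 3 ∨ r = 7 ∨ r = 9) (N : ℕ) :
    ∏ j ∈ Finset.Icc 1 N, (1 + (X:S)^(10*j-r)) = Pi1 ((Finset.Icc 1 N).image (fun j => 10*j-r)) := by
  rw [Pi1, Finset.prod_image]
  intro a ha b hb hab
  rw [Finset.mem_coe, Finset.mem_Icc] at ha hb
  simp only at hab; omega

lemma Bs_decomp (N : ℕ) :
    Bs (10*N) = (((Finset.Icc 1 N).image (fun j => 10*j-1)) ∪ ((Finset.Icc 1 N).image (fun j => 10*j-9)))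
      ∪ (((Finset.Icc 1 N).image (fun j => 10*j-3)) ∪ ((Finset.Icc 1 N).image (fun j => 10*j-7))) := by
  ext m
  simp only [Bs, Finset.mem_filter, Finset.mem_Icc, Finset.mem_union, Finset.mem_image,
    Nat.odd_iff]
  constructor
  · rintro ⟨⟨h1, h2⟩, h3, h4⟩
    rcases (show m % 10 = 1 ∨ m % 10 = 3 ∨ m % 10 = 7 ∨ m % 10 = 9 by omega) with h|h|h|h
    · exact Or.inl (Or.inr ⟨(m+9)/10, by omega, by omega⟩)
    · exact Or.inr (Or.inr ⟨(m+7)/10, by omega, by omega⟩)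
    · exact Or.inr (Or.inl ⟨(m+3)/10, by omega, by omega⟩)
    · exact Or.inl (Or.inl ⟨(m+1)/10, by omega, by omega⟩)
  · rintro ((⟨j, hj, rfl⟩|⟨j, hj, rfl⟩)|(⟨j, hj, rfl⟩|⟨j, hj, rfl⟩)) <;> omega

lemma PR_mul (N : ℕ) : PR 4 N * PR 2 N = Pi1 (Bs (10*N)) := by
  rw [PR, PR, Finset.prod_mul_distrib, Finset.prod_mul_distrib]
  have e1 : ∀ j ∈ Finset.Icc 1 N, (1 + (X:S)^(10*j-5+4)) = 1 + (X:S)^(10*j-1) := by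
    intro j hj; rw [Finset.mem_Icc] at hj; rw [show 10*j-5+4 = 10*j-1 by omega]
  have e9 : ∀ j ∈ Finset.Icc 1 N, (1 + (X:S)^(10*j-(5+4))) = 1 + (X:S)^(10*j-9) := by
    intro j hj; norm_num
  have e3 : ∀ j ∈ Finset.Icc 1 N, (1 + (X:S)^(10*j-5+2)) = 1 + (X:S)^(10*j-3) := by
    intro j hj; rw [Finset.mem_Icc] at hj; rw [show 10*j-5+2 = 10*j-3 by omega]
  have e7 : ∀ j ∈ Finset.Icc 1 N, (1 + (X:S)^(10*j-(5+2))) = 1 + (X:S)^(10*j-7) := by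
    intro j hj; norm_num
  rw [Finset.prod_congr rfl e1, Finset.prod_congr rfl e9, Finset.prod_congr rfl e3,
    Finset.prod_congr rfl e7]
  rw [imgBs 1 (by norm_num) N, imgBs 9 (by norm_num) N, imgBs 3 (by norm_num) N,
    imgBs 7 (by norm_num) N]
  have d19 : Disjoint ((Finset.Icc 1 N).image (fun j => 10*j-1)) ((Finset.Icc 1 N).image (fun j => 10*j-9)) := by
    rw [Finset.disjoint_left]
    intro m hm hm'
    rw [Finset.mem_image] at hm hm'
    obtain ⟨j, hj, rfl⟩ := hm
    obtain ⟨k, hk, he⟩ := hm'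
    rw [Finset.mem_Icc] at hj hk
    omega
  have d37 : Disjoint ((Finset.Icc 1 N).image (fun j => 10*j-3)) ((Finset.Icc 1 N).image (fun j => 10*j-7)) := by
    rw [Finset.disjoint_left]
    intro m hm hm'
    rw [Finset.mem_image] at hm hm'
    obtain ⟨j, hj, rfl⟩ := hm
    obtain ⟨k, hk, he⟩ := hm'
    rw [Finset.mem_Icc] at hj hk
    omega
  have dbig : Disjoint (((Finset.Icc 1 N).image (fun j => 10*j-1)) ∪ ((Finset.Icc 1 N).image (fun j => 10*j-9)))
      (((Finset.Icc 1 N).image (fun j => 10*j-3)) ∪ ((Finset.Icc 1 N).image (fun j => 10*j-7))) := by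
    rw [Finset.disjoint_left]
    rintro m hm hm'
    simp only [Finset.mem_union, Finset.mem_image, Finset.mem_Icc] at hm hm'
    rcases hm with ⟨j, hj, rfl⟩|⟨j, hj, rfl⟩ <;> rcases hm' with ⟨k, hk, he⟩|⟨k, hk, he⟩ <;> omega
  rw [Bs_decomp N]
  simp only [Pi1]
  rw [Finset.prod_union dbig, Finset.prod_union d19, Finset.prod_union d37]

end FiveCore4

namespace FiveCore5
open FiveCore FiveCore2 FiveCore3 FiveCore4

lemma ite_mul_ite (P Q : Prop) [Decidable P] [Decidable Q] :
    (if P then (1:ZMod 2) else 0) * (if Q then 1 else 0) = if P ∧ Q then 1 else 0 := by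
  split_ifs with h1 h2 h3 <;> simp_all

lemma coeff_ErEr (n : ℕ) :
    (PowerSeries.coeff (R := ZMod 2) n) (Er 4 * Er 2)
      = ∑ z ∈ (Finset.Icc (-(n:ℤ)) (n:ℤ)) ×ˢ (Finset.Icc (-(n:ℤ)) (n:ℤ)),
          (if eps 4 z.1 + eps 2 z.2 = n then 1 else 0 : ZMod 2) := by
  rw [PowerSeries.coeff_mul]
  have hterm : ∀ p ∈ Finset.HasAntidiagonal.antidiagonal n,
      (PowerSeries.coeff (R := ZMod 2) p.1) (Er 4) * (PowerSeries.coeff (R := ZMod 2) p.2) (Er 2)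
      = ∑ z ∈ (Finset.Icc (-(n:ℤ)) (n:ℤ)) ×ˢ (Finset.Icc (-(n:ℤ)) (n:ℤ)),
          (if eps 4 z.1 = p.1 ∧ eps 2 z.2 = p.2 then 1 else 0 : ZMod 2) := by
    intro p hp
    rw [Finset.HasAntidiagonal.mem_antidiagonal] at hp
    rw [Er, Er, PowerSeries.coeff_mk, PowerSeries.coeff_mk, Finset.sum_mul_sum]
    rw [← Finset.sum_product']
    rw [Finset.sum_congr rfl (fun z _ => ite_mul_ite _ _)]
    apply Finset.sum_subset
    · apply Finset.product_subset_product <;> apply Finset.Icc_subset_Icc <;> omega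
    · intro z hz hnz
      rw [Finset.mem_product, Finset.mem_Icc, Finset.mem_Icc] at hz hnz
      rw [if_neg]
      rintro ⟨ha, hb⟩
      have h1 := abs_le_eps 4 (by norm_num) (by norm_num) z.1
      have h2 := abs_le_eps 2 (by norm_num) (by norm_num) z.2
      have e1 : ((eps 4 z.1 : ℕ) : ℤ) = 5*z.1^2 + (4:ℤ)*z.1 := by
        rw [eps]; exact_mod_cast Int.toNat_of_nonneg (eps_nonneg 4 (by norm_num) z.1)
      have e2 : ((eps 2 z.2 : ℕ) : ℤ) = 5*z.2^2 + (2:ℤ)*z.2 := by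
        rw [eps]; exact_mod_cast Int.toNat_of_nonneg (eps_nonneg 2 (by norm_num) z.2)
      omega
  rw [Finset.sum_congr rfl hterm, Finset.sum_comm]
  apply Finset.sum_congr rfl
  intro z _
  have hcond : ∀ p : ℕ × ℕ, (eps 4 z.1 = p.1 ∧ eps 2 z.2 = p.2) ↔ p = (eps 4 z.1, eps 2 z.2) := by
    intro p
    rw [Prod.ext_iff]
    constructor
    · rintro ⟨h1, h2⟩; exact ⟨h1.symm, h2.symm⟩
    · rintro ⟨h1, h2⟩; exact ⟨h1.symm, h2.symm⟩
  rw [Finset.sum_congr rfl (fun p _ => by rw [if_congr (hcond p) rfl rfl])]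
  rw [Finset.sum_ite_eq' (Finset.HasAntidiagonal.antidiagonal n) (eps 4 z.1, eps 2 z.2) (fun _ => (1:ZMod 2))]
  rw [if_congr (Finset.HasAntidiagonal.mem_antidiagonal) rfl rfl]

lemma eps_eq_iff (a b : ℤ) (n : ℕ) :
    (eps 4 a + eps 2 b = n) ↔ (5*a^2+4*a+5*b^2+2*b = (n:ℤ)) := by
  have e1 : ((eps 4 a : ℕ) : ℤ) = 5*a^2 + (4:ℤ)*a := by
    rw [eps]; exact_mod_cast Int.toNat_of_nonneg (eps_nonneg 4 (by norm_num) a)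
  have e2 : ((eps 2 b : ℕ) : ℤ) = 5*b^2 + (2:ℤ)*b := by
    rw [eps]; exact_mod_cast Int.toNat_of_nonneg (eps_nonneg 2 (by norm_num) b)
  omega

end FiveCore5

namespace FiveCore6
open FiveCore FiveCore2 FiveCore3 FiveCore4 FiveCore5

lemma solBound (a b : ℤ) (n : ℕ) (heq : 5*a^2+4*a+5*b^2+2*b = (n:ℤ)) :
    -(n:ℤ) ≤ a ∧ a ≤ (n:ℤ) ∧ -(n:ℤ) ≤ b ∧ b ≤ (n:ℤ) := by
  have ha0 : a^2 + a ≥ 0 ∧ a^2 ≥ a ∧ a^2 ≥ -a := by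
    rcases le_or_gt 0 a with h|h
    · refine ⟨by nlinarith, by nlinarith, by nlinarith⟩
    · have h' : (0:ℤ) ≤ (-a) * (-(a+1)) := mul_nonneg (by omega) (by omega)
      refine ⟨by nlinarith, by nlinarith, by nlinarith⟩
  have hb0 : b^2 + b ≥ 0 ∧ b^2 ≥ b ∧ b^2 ≥ -b := by
    rcases le_or_gt 0 b with h|h
    · refine ⟨by nlinarith, by nlinarith, by nlinarith⟩
    · have h' : (0:ℤ) ≤ (-b) * (-(b+1)) := mul_nonneg (by omega) (by omega)
      refine ⟨by nlinarith, by nlinarith, by nlinarith⟩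
  obtain ⟨ha1, ha2, ha3⟩ := ha0
  obtain ⟨hb1, hb2, hb3⟩ := hb0
  have h1 : 5*a^2+4*a ≥ a := by nlinarith
  have h2 : 5*a^2+4*a ≥ -a := by nlinarith
  have h3 : 5*b^2+2*b ≥ b := by nlinarith
  have h4 : 5*b^2+2*b ≥ -b := by nlinarith
  have h5 : 5*b^2+2*b ≥ 0 := by nlinarith
  have h6 : 5*a^2+4*a ≥ 0 := by nlinarith
  exact ⟨by linarith, by linarith, by linarith, by linarith⟩

lemma hdiv5 (a b : ℤ) (n : ℕ) (heq : 5*a^2+4*a+5*b^2+2*b = (n:ℤ)) :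
    (5:ℤ) ∣ ((n:ℤ) - 4*a - 2*b) := ⟨a^2+b^2, by linear_combination -heq⟩

lemma sum_vanish (n : ℕ) (hn : n % 10 = 2 ∨ n % 10 = 6) :
    (∑ z ∈ (Finset.Icc (-(n:ℤ)) (n:ℤ)) ×ˢ (Finset.Icc (-(n:ℤ)) (n:ℤ)),
      (if eps 4 z.1 + eps 2 z.2 = n then 1 else 0 : ZMod 2)) = 0 := by
  rw [Finset.sum_congr rfl (fun z _ => by rw [if_congr (eps_eq_iff z.1 z.2 n) rfl rfl])]
  rw [← Finset.sum_filter]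
  have hmem : ∀ z : ℤ × ℤ, z ∈ ((Finset.Icc (-(n:ℤ)) (n:ℤ)) ×ˢ (Finset.Icc (-(n:ℤ)) (n:ℤ))).filter
      (fun z : ℤ×ℤ => 5*z.1^2+4*z.1+5*z.2^2+2*z.2 = (n:ℤ)) →
      5*z.1^2+4*z.1+5*z.2^2+2*z.2 = (n:ℤ) := by
    intro z hz
    exact (Finset.mem_filter.1 hz).2
  have hmem' : ∀ z : ℤ × ℤ, 5*z.1^2+4*z.1+5*z.2^2+2*z.2 = (n:ℤ) →
      z ∈ ((Finset.Icc (-(n:ℤ)) (n:ℤ)) ×ˢ (Finset.Icc (-(n:ℤ)) (n:ℤ))).filter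
      (fun z : ℤ×ℤ => 5*z.1^2+4*z.1+5*z.2^2+2*z.2 = (n:ℤ)) := by
    intro z hz
    obtain ⟨b1, b2, b3, b4⟩ := solBound z.1 z.2 n hz
    rw [Finset.mem_filter, Finset.mem_product, Finset.mem_Icc, Finset.mem_Icc]
    exact ⟨⟨⟨b1, b2⟩, b3, b4⟩, hz⟩
  rcases hn with hn | hn
  · -- n ≡ 2 (mod 10) : involution (u,v) ↦ (-v,-u), i.e. (a,b) ↦ ((3b-4a-3)/5, (3a+4b+1)/5)
    apply Finset.sum_involution (fun z _ => (((3*z.2-4*z.1-3)/5 : ℤ), ((3*z.1+4*z.2+1)/5 : ℤ)))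
    · intro z hz; decide
    · intro z hz hne hfixed
      have heq := hmem z hz
      have h5 := hdiv5 z.1 z.2 n heq
      have hd1 : (5:ℤ) ∣ (3*z.2-4*z.1-3) := by omega
      have h1 : 5 * ((3*z.2-4*z.1-3)/5) = 3*z.2-4*z.1-3 := Int.mul_ediv_cancel' hd1
      have hfa : ((3*z.2-4*z.1-3)/5) = z.1 := congrArg Prod.fst hfixed
      rw [hfa] at h1
      have hfx : z.2 = 3*z.1+1 := by linarith
      have h10 : (n:ℤ) = 50*z.1^2+40*z.1+7 := by
        linear_combination -heq + (5*z.2+15*z.1+7)*hfx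
      obtain ⟨t, ht⟩ : ∃ t:ℤ, t = z.1^2 := ⟨z.1^2, rfl⟩
      rw [← ht] at h10
      omega
    · intro z hz
      have heq := hmem z hz
      have h5 := hdiv5 z.1 z.2 n heq
      have hd1 : (5:ℤ) ∣ (3*z.2-4*z.1-3) := by omega
      have hd2 : (5:ℤ) ∣ (3*z.1+4*z.2+1) := by omega
      have h1 : 5 * ((3*z.2-4*z.1-3)/5) = 3*z.2-4*z.1-3 := Int.mul_ediv_cancel' hd1
      have h2' : 5 * ((3*z.1+4*z.2+1)/5) = 3*z.1+4*z.2+1 := Int.mul_ediv_cancel' hd2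
      apply hmem'
      have h25 : (25:ℤ) * (5*((3*z.2-4*z.1-3)/5)^2+4*((3*z.2-4*z.1-3)/5)
          +5*((3*z.1+4*z.2+1)/5)^2+2*((3*z.1+4*z.2+1)/5)) = 25*(n:ℤ) := by
        linear_combination (5*(5*((3*z.2-4*z.1-3)/5) + (3*z.2-4*z.1-3)) + 20) * h1
          + (5*(5*((3*z.1+4*z.2+1)/5) + (3*z.1+4*z.2+1)) + 10) * h2' + 25*heq
      exact mul_left_cancel₀ (by norm_num : (25:ℤ) ≠ 0) h25
    · intro z hz
      have heq := hmem z hz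
      have h5 := hdiv5 z.1 z.2 n heq
      have hd1 : (5:ℤ) ∣ (3*z.2-4*z.1-3) := by omega
      have hd2 : (5:ℤ) ∣ (3*z.1+4*z.2+1) := by omega
      have h1 : 5 * ((3*z.2-4*z.1-3)/5) = 3*z.2-4*z.1-3 := Int.mul_ediv_cancel' hd1
      have h2' : 5 * ((3*z.1+4*z.2+1)/5) = 3*z.1+4*z.2+1 := Int.mul_ediv_cancel' hd2
      have k1 : 3*((3*z.1+4*z.2+1)/5) - 4*((3*z.2-4*z.1-3)/5) - 3 = 5*z.1 := by linarith
      have k2 : 3*((3*z.2-4*z.1-3)/5) + 4*((3*z.1+4*z.2+1)/5) + 1 = 5*z.2 := by linarith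
      have : ((3*((3*z.1+4*z.2+1)/5) - 4*((3*z.2-4*z.1-3)/5) - 3)/5,
          (3*((3*z.2-4*z.1-3)/5) + 4*((3*z.1+4*z.2+1)/5) + 1)/5) = z := by
        rw [k1, k2, Int.mul_ediv_cancel_left _ (by norm_num : (5:ℤ) ≠ 0),
          Int.mul_ediv_cancel_left _ (by norm_num : (5:ℤ) ≠ 0)]
      exact this
  · -- n ≡ 6 (mod 10) : involution (u,v) ↦ (v,u), i.e. (a,b) ↦ ((4a-3b-1)/5, (-3a-4b-3)/5)
    apply Finset.sum_involution (fun z _ => (((4*z.1-3*z.2-1)/5 : ℤ), ((-3*z.1-4*z.2-3)/5 : ℤ)))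
    · intro z hz; decide
    · intro z hz hne hfixed
      have heq := hmem z hz
      have h5 := hdiv5 z.1 z.2 n heq
      have hd1 : (5:ℤ) ∣ (4*z.1-3*z.2-1) := by omega
      have h1 : 5 * ((4*z.1-3*z.2-1)/5) = 4*z.1-3*z.2-1 := Int.mul_ediv_cancel' hd1
      have hfa : ((4*z.1-3*z.2-1)/5) = z.1 := congrArg Prod.fst hfixed
      rw [hfa] at h1
      have hfx : z.1 + 3*z.2 + 1 = 0 := by linarith
      have h10 : (n:ℤ) = 50*z.2^2+20*z.2+1 := by
        linear_combination -heq + (5*z.1-15*z.2-1)*hfx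
      obtain ⟨t, ht⟩ : ∃ t:ℤ, t = z.2^2 := ⟨z.2^2, rfl⟩
      rw [← ht] at h10
      omega
    · intro z hz
      have heq := hmem z hz
      have h5 := hdiv5 z.1 z.2 n heq
      have hd1 : (5:ℤ) ∣ (4*z.1-3*z.2-1) := by omega
      have hd2 : (5:ℤ) ∣ (-3*z.1-4*z.2-3) := by omega
      have h1 : 5 * ((4*z.1-3*z.2-1)/5) = 4*z.1-3*z.2-1 := Int.mul_ediv_cancel' hd1
      have h2' : 5 * ((-3*z.1-4*z.2-3)/5) = -3*z.1-4*z.2-3 := Int.mul_ediv_cancel' hd2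
      apply hmem'
      have h25 : (25:ℤ) * (5*((4*z.1-3*z.2-1)/5)^2+4*((4*z.1-3*z.2-1)/5)
          +5*((-3*z.1-4*z.2-3)/5)^2+2*((-3*z.1-4*z.2-3)/5)) = 25*(n:ℤ) := by
        linear_combination (5*(5*((4*z.1-3*z.2-1)/5) + (4*z.1-3*z.2-1)) + 20) * h1
          + (5*(5*((-3*z.1-4*z.2-3)/5) + (-3*z.1-4*z.2-3)) + 10) * h2' + 25*heq
      exact mul_left_cancel₀ (by norm_num : (25:ℤ) ≠ 0) h25
    · intro z hz
      have heq := hmem z hz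
      have h5 := hdiv5 z.1 z.2 n heq
      have hd1 : (5:ℤ) ∣ (4*z.1-3*z.2-1) := by omega
      have hd2 : (5:ℤ) ∣ (-3*z.1-4*z.2-3) := by omega
      have h1 : 5 * ((4*z.1-3*z.2-1)/5) = 4*z.1-3*z.2-1 := Int.mul_ediv_cancel' hd1
      have h2' : 5 * ((-3*z.1-4*z.2-3)/5) = -3*z.1-4*z.2-3 := Int.mul_ediv_cancel' hd2
      have k1 : 4*((4*z.1-3*z.2-1)/5) - 3*((-3*z.1-4*z.2-3)/5) - 1 = 5*z.1 := by linarith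
      have k2 : -3*((4*z.1-3*z.2-1)/5) - 4*((-3*z.1-4*z.2-3)/5) - 3 = 5*z.2 := by linarith
      have : ((4*((4*z.1-3*z.2-1)/5) - 3*((-3*z.1-4*z.2-3)/5) - 1)/5,
          (-3*((4*z.1-3*z.2-1)/5) - 4*((-3*z.1-4*z.2-3)/5) - 3)/5) = z := by
        rw [k1, k2, Int.mul_ediv_cancel_left _ (by norm_num : (5:ℤ) ≠ 0),
          Int.mul_ediv_cancel_left _ (by norm_num : (5:ℤ) ≠ 0)]
      exact this

end FiveCore6

namespace FiveCore7
open FiveCore FiveCore2 FiveCore3 FiveCore4 FiveCore5 FiveCore6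

lemma sub1 (a : S) : 1 - a = 1 + a := by
  rw [sub_eq_add_neg, neg_eq]

lemma ring5 {R : Type} [CommRing R] (hh : (2:R) = 0) (y : R) :
    (1+y)^5 = (1+y)*(1+y^4) := by
  linear_combination (2*y+5*y^2+5*y^3+2*y^4) * hh

lemma mapP (N : ℕ) :
    PowerSeries.map (Int.castRingHom (ZMod 2)) (∏ k ∈ Finset.Icc 1 N, (1 - PowerSeries.X ^ k))
      = Pi1 (Finset.Icc 1 N) := by
  rw [map_prod, Pi1]
  apply Finset.prod_congr rfl
  intro k _
  rw [map_sub, map_one, map_pow, PowerSeries.map_X, sub1]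

lemma mapQ (N : ℕ) :
    PowerSeries.map (Int.castRingHom (ZMod 2)) (∏ k ∈ Finset.Icc 1 N, (1 - PowerSeries.X ^ (5*k))^5)
      = PiE N 5 * PiE N 20 := by
  rw [map_prod, PiE, PiE, ← Finset.prod_mul_distrib]
  apply Finset.prod_congr rfl
  intro k _
  rw [map_pow, map_sub, map_one, map_pow, PowerSeries.map_X, sub1, ring5 h2]
  congr 1
  rw [← pow_mul, show 5*k*4 = 20*k by ring]

lemma mapC (c : ℕ → ℤ) :
    PowerSeries.map (Int.castRingHom (ZMod 2)) (PowerSeries.mk fun j => c j)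
      = PowerSeries.mk fun j => ((c j : ℤ) : ZMod 2) := by
  ext m
  rw [PowerSeries.coeff_map, PowerSeries.coeff_mk, PowerSeries.coeff_mk]
  rfl

lemma constPi1 {s : Finset ℕ} (h : ∀ m ∈ s, 1 ≤ m) :
    constantCoeff (R := ZMod 2) (Pi1 s) = 1 := by
  rw [Pi1, map_prod]
  apply Finset.prod_eq_one
  intro m hm
  rw [map_add, map_one, ← PowerSeries.coeff_zero_eq_constantCoeff_apply,
    PowerSeries.coeff_X_pow, if_neg (by have := h m hm; omega), add_zero]

theorem key_coeff (c : ℕ → ℤ)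
    (hc : ∀ n N : ℕ, n ≤ N →
      (PowerSeries.coeff (R := ℤ) n)
          ((∏ k ∈ Finset.Icc 1 N, (1 - PowerSeries.X ^ k)) * PowerSeries.mk (fun j => c j)) =
        (PowerSeries.coeff (R := ℤ) n)
          (∏ k ∈ Finset.Icc 1 N, (1 - PowerSeries.X ^ (5 * k)) ^ 5)) (n : ℕ) :
    ((c n : ℤ) : ZMod 2) = (PowerSeries.coeff (R := ZMod 2) n) (Er 4 * Er 2) := by
  set N' := 2*n+2 with hN'
  set C : S := PowerSeries.mk fun j => ((c j : ℤ) : ZMod 2) with hC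
  -- transfer hc to ZMod 2
  have h1 : Cg (n+1) (Pi1 (Finset.Icc 1 N') * C) (PiE N' 5 * PiE N' 20) := by
    apply Cg.of_coeff
    intro m hm
    have hle : m ≤ N' := by omega
    have := congrArg (Int.castRingHom (ZMod 2)) (hc m N' hle)
    rw [← PowerSeries.coeff_map, ← PowerSeries.coeff_map] at this
    rw [map_mul, mapP, mapC, mapQ] at this
    exact this
  -- the Er side
  have hDD2 : DD N' * DD N' = PiE N' 20 := by
    rw [DD_PiE, PiE, PiE, prodsq (Finset.Icc 1 N') (fun j => 10*j)]
    apply Finset.prod_congr rfl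
    intro j _
    rw [show 2*(10*j) = 20*j by ring]
  have hEE : Cg (n+1) (Er 4 * Er 2) (Pi1 (Bs (10*N')) * PiE N' 20) := by
    have h4 := Er_cong 4 (by norm_num) (by norm_num) n
    have h2' := Er_cong 2 (by norm_num) (by norm_num) n
    have hmul := Cg.mul h4 h2'
    have hident : (PR 4 N' * DD N') * (PR 2 N' * DD N') = Pi1 (Bs (10*N')) * PiE N' 20 := by
      rw [← PR_mul, ← hDD2]
      ring
    rwa [hident] at hmul
  have hcore : Cg (n+1) (CoreL N') (CoreR N') := core n N' (by omega) (by omega)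
  have h2side : Cg (n+1) (Pi1 (Finset.Icc 1 N') * (Er 4 * Er 2)) (PiE N' 5 * PiE N' 20) := by
    have ha := Cg.mul (Cg.refl (n+1) (Pi1 (Finset.Icc 1 N'))) hEE
    have hb := Cg.mul hcore (Cg.refl (n+1) (PiE N' 20))
    rw [CoreL, CoreR] at hb
    have heq : Pi1 (Finset.Icc 1 N') * (Pi1 (Bs (10*N')) * PiE N' 20)
        = Pi1 (Finset.Icc 1 N') * Pi1 (Bs (10*N')) * PiE N' 20 := by ring
    rw [heq] at ha
    exact ha.trans hb
  -- combine
  have h3 : (X:S)^(n+1) ∣ Pi1 (Finset.Icc 1 N') * (C - (Er 4 * Er 2)) := by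
    have := (h1.trans h2side.symm)
    rw [Cg, ← mul_sub] at this
    exact this
  have h4 : (X:S)^(n+1) ∣ (C - (Er 4 * Er 2)) := by
    apply dvd_of_unit_mul (u := Pi1 (Finset.Icc 1 N'))
    · rw [constPi1 (fun m hm => by rw [Finset.mem_Icc] at hm; omega)]
      exact one_ne_zero
    · exact h3
  have h5 : (PowerSeries.coeff (R := ZMod 2) n) C = (PowerSeries.coeff (R := ZMod 2) n) (Er 4 * Er 2) :=
    Cg.coeff_eq h4 (by omega)
  rw [hC, PowerSeries.coeff_mk] at h5
  exact h5

end FiveCore7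

/-- Garvan's congruence for 5-cores: `c₅(n)` is even when `n ≡ 2, 6 (mod 10)`. -/
theorem five_core_even (c : ℕ → ℤ)
    (hc : ∀ n N : ℕ, n ≤ N →
      (PowerSeries.coeff (R := ℤ) n)
          ((∏ k ∈ Finset.Icc 1 N, (1 - PowerSeries.X ^ k)) * PowerSeries.mk (fun j => c j)) =
        (PowerSeries.coeff (R := ℤ) n)
          (∏ k ∈ Finset.Icc 1 N, (1 - PowerSeries.X ^ (5 * k)) ^ 5)) :
    ∀ n : ℕ, (n % 10 = 2 ∨ n % 10 = 6) → 2 ∣ c n := by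
  intro n hn
  have h := FiveCore7.key_coeff c hc n
  rw [FiveCore5.coeff_ErEr, FiveCore6.sum_vanish n hn] at h
  have := (ZMod.intCast_zmod_eq_zero_iff_dvd (c n) 2).1 h
  exact_mod_cast this
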